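/- Let X be a set, T* > 0, let N and N' be finite subsets of X, and let a : N × (0,T*) → ℝ and b : N' × (0,T*) → ℝ be such that for each s ∈ N the function t ↦ a_s(t) is nonnegative and integrable on (0,T*), and similarly for each s' ∈ N' the function t ↦ b_{s'}(t) is nonnegative and integrable. Let c : (X × (0,T*)) × (X × (0,T*)) → ℝ satisfy c((x,t),(x,t)) = 0 for all x and t, and let φ, ψ : X × (0,T*) → ℝ be bounded measurable functions (measurable in t for each fixed spatial point) satisfying φ(x,t) + ψ(y,τ) ≤ c((x,t),(y,τ)) for all x ∈ N, y ∈ N' and t, τ ∈ (0,T*). Define ṽ : (N ∪ N') × (0,T*) → ℝ by: ṽ(s,t) = φ(s,t) if s ∈ N \ N', or if s ∈ N ∩ N' and a_s(t) ≥ b_s(t); and ṽ(s,t) = −ψ(s,t) if s ∈ N' \ N, or if s ∈ N ∩ N' and a_s(t) < b_s(t). Then Σ_{s ∈ N} ∫_0^{T*} a_s(t) φ(s,t) dt + Σ_{s' ∈ N'} ∫_0^{T*} b_{s'}(t) ψ(s',t) dt ≤ ∫_0^{T*} ( Σ_{s ∈ N} a_s(t) ṽ(s,t) − Σ_{s' ∈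 N'} b_{s'}(t) ṽ(s',t) ) dt. -/

import Mathlib

open MeasureTheory
open scoped BigOperators

lemma integrable_ite_mul (μ : Measure ℝ) (p q a φ ψ : ℝ → ℝ)
    (hp : AEMeasurable p μ) (hq : AEMeasurable q μ) (ha : Integrable a μ)
    (hφ : Measurable φ) (hψ : Measurable ψ) (C : ℝ)
    (hφb : ∀ t, |φ t| ≤ C) (hψb : ∀ t, |ψ t| ≤ C) :
    Integrable (fun t => if p t < q t then -(a t * ψ t) else a t * φ t) μ := by
  have hC : 0 ≤ C := le_trans (abs_nonneg _) (hφb 0)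
  have hma := ha.aemeasurable
  have hmeas : AEStronglyMeasurable
      (fun t => if p t < q t then -(a t * ψ t) else a t * φ t) μ := by
    refine ⟨fun t => if hp.mk p t < hq.mk q t then -(hma.mk a t * ψ t)
        else hma.mk a t * φ t, ?_, ?_⟩
    · exact (Measurable.ite (measurableSet_lt hp.measurable_mk hq.measurable_mk)
        (hma.measurable_mk.mul hψ).neg (hma.measurable_mk.mul hφ)).stronglyMeasurable
    · filter_upwards [hma.ae_eq_mk, hp.ae_eq_mk, hq.ae_eq_mk] with t h1 h2 h3
      rw [← h1, ← h2, ← h3]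
  refine Integrable.mono ((ha.norm).const_mul C) hmeas (ae_of_all _ fun t => ?_)
  have hrhs : ‖C * ‖a t‖‖ = C * |a t| := by
    rw [Real.norm_eq_abs, Real.norm_eq_abs, abs_of_nonneg (by positivity)]
  rw [hrhs]
  by_cases h : p t < q t <;>
    simp only [h, if_true, if_false, norm_neg, Real.norm_eq_abs, abs_mul]
  · exact mul_le_mul (le_refl _) (hψb t) (abs_nonneg _) (abs_nonneg _) |>.trans
      (le_of_eq (mul_comm _ _))
  · exact mul_le_mul (le_refl _) (hφb t) (abs_nonneg _) (abs_nonneg _) |>.trans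
      (le_of_eq (mul_comm _ _))

lemma integrable_bddmul (μ : Measure ℝ) (a φ : ℝ → ℝ) (ha : Integrable a μ)
    (hφ : Measurable φ) (C : ℝ) (hφb : ∀ t, |φ t| ≤ C) :
    Integrable (fun t => a t * φ t) μ := by
  have := Integrable.bdd_mul ha hφ.aestronglyMeasurable (c := C) (ae_of_all _ fun t => by
    rw [Real.norm_eq_abs]; exact hφb t)
  simpa [mul_comm] using this

set_option maxHeartbeats 1000000 in
/-- **Combination of dual potentials into a single test function (parabolic case).**
Let `N`, `N'` be finite subsets of `X`, with nonnegative integrable time-dependent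
intensities `a` on `N` and `b` on `N'` over `(0, T*)`.  Let the cost `c` vanish on the
diagonal of the space-time cylinder, and let the bounded measurable pair `(φ, ψ)` be
admissible.  Define `ṽ(s,t) = φ(s,t)` if `s ∈ N \ N'`, or `s ∈ N ∩ N'` and
`a s t ≥ b s t`; and `ṽ(s,t) = -ψ(s,t)` if `s ∈ N' \ N`, or `s ∈ N ∩ N'` and
`a s t < b s t`.  Then
`Σ_{s∈N} ∫₀^{T*} a φ + Σ_{s'∈N'} ∫₀^{T*} b ψ ≤ ∫₀^{T*} (Σ_{s∈N} a ṽ − Σ_{s'∈N'} b ṽ)`. -/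
theorem dual_pair_single_test_function_parabolic {X : Type*}
    (T : ℝ) (hT : 0 < T)
    (N N' : Finset X) (a b : X → ℝ → ℝ)
    (ha0 : ∀ s ∈ N, ∀ t ∈ Set.Ioo (0 : ℝ) T, 0 ≤ a s t)
    (hai : ∀ s ∈ N, IntegrableOn (a s) (Set.Ioo (0 : ℝ) T))
    (hb0 : ∀ s' ∈ N', ∀ t ∈ Set.Ioo (0 : ℝ) T, 0 ≤ b s' t)
    (hbi : ∀ s' ∈ N', IntegrableOn (b s') (Set.Ioo (0 : ℝ) T))
    (c : X × ℝ → X × ℝ → ℝ) (hc : ∀ x t, c (x, t) (x, t) = 0)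
    (φ ψ : X → ℝ → ℝ)
    (hφm : ∀ x, Measurable (φ x)) (hψm : ∀ y, Measurable (ψ y))
    (C : ℝ) (hφb : ∀ x t, |φ x t| ≤ C) (hψb : ∀ y t, |ψ y t| ≤ C)
    (hadm : ∀ x ∈ N, ∀ y ∈ N', ∀ t ∈ Set.Ioo (0 : ℝ) T, ∀ τ ∈ Set.Ioo (0 : ℝ) T,
      φ x t + ψ y τ ≤ c (x, t) (y, τ))
    (v : X → ℝ → ℝ)
    (hv1 : ∀ s ∈ N, ∀ t ∈ Set.Ioo (0 : ℝ) T, (s ∉ N' ∨ b s t ≤ a s t) → v s t = φ s t)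
    (hv2 : ∀ s ∈ N', ∀ t ∈ Set.Ioo (0 : ℝ) T, (s ∉ N ∨ a s t < b s t) → v s t = -ψ s t) :
    (∑ s ∈ N, ∫ t in Set.Ioo (0 : ℝ) T, a s t * φ s t) +
      (∑ s' ∈ N', ∫ t in Set.Ioo (0 : ℝ) T, b s' t * ψ s' t) ≤
    ∫ t in Set.Ioo (0 : ℝ) T,
      ((∑ s ∈ N, a s t * v s t) - (∑ s' ∈ N', b s' t * v s' t)) := by
  set I := Set.Ioo (0 : ℝ) T with hI
  have hIm : MeasurableSet I := measurableSet_Ioo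
  have hkey : ∀ s ∈ N, s ∈ N' → ∀ t ∈ I, φ s t + ψ s t ≤ 0 := fun s hs hs' t ht => by
    have := hadm s hs s hs' t ht t ht
    rwa [hc s t] at this
  have hAφ : ∀ s ∈ N, IntegrableOn (fun t => a s t * φ s t) I := fun s hs =>
    integrable_bddmul _ _ _ (hai s hs) (hφm s) C (fun t => hφb s t)
  have hBψ : ∀ s ∈ N', IntegrableOn (fun t => b s t * ψ s t) I := fun s hs =>
    integrable_bddmul _ _ _ (hbi s hs) (hψm s) C (fun t => hψb s t)
  have hAv : ∀ s ∈ N, IntegrableOn (fun t => a s t * v s t) I := by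
    intro s hs
    by_cases hs' : s ∈ N'
    · refine IntegrableOn.congr_fun
        (integrable_ite_mul (volume.restrict I) (a s) (b s) (a s) (φ s) (ψ s)
          (hai s hs).aemeasurable (hbi s hs').aemeasurable (hai s hs)
          (hφm s) (hψm s) C (hφb s) (hψb s))
        (fun t ht => ?_) hIm
      by_cases h : a s t < b s t
      · simp only [h, if_true]
        rw [hv2 s hs' t ht (Or.inr h)]; ring
      · simp only [h, if_false]
        rw [hv1 s hs t ht (Or.inr (not_lt.mp h))]
    · exact IntegrableOn.congr_fun (hAφ s hs)
        (fun t ht => by rw [hv1 s hs t ht (Or.inl hs')]) hIm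
  have hBv : ∀ s ∈ N', IntegrableOn (fun t => b s t * v s t) I := by
    intro s hs'
    by_cases hs : s ∈ N
    · refine IntegrableOn.congr_fun
        (integrable_ite_mul (volume.restrict I) (a s) (b s) (b s) (φ s) (ψ s)
          (hai s hs).aemeasurable (hbi s hs').aemeasurable (hbi s hs')
          (hφm s) (hψm s) C (hφb s) (hψb s))
        (fun t ht => ?_) hIm
      by_cases h : a s t < b s t
      · simp only [h, if_true]
        rw [hv2 s hs' t ht (Or.inr h)]; ring
      · simp only [h, if_false]
        rw [hv1 s hs t ht (Or.inr (not_lt.mp h))]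
    · refine IntegrableOn.congr_fun
        (integrable_bddmul _ (b s) (fun t => -ψ s t) (hbi s hs') (hψm s).neg C
          (fun t => by rw [abs_neg]; exact hψb s t))
        (fun t ht => by rw [hv2 s hs' t ht (Or.inl hs)]) hIm
  -- rewrite LHS as a single integral
  have eN : (∑ s ∈ N, ∫ t in I, a s t * φ s t)
      = ∫ t in I, ∑ s ∈ N, a s t * φ s t :=
    (integral_finset_sum N fun s hs => hAφ s hs).symm
  have eN' : (∑ s ∈ N', ∫ t in I, b s t * ψ s t)
      = ∫ t in I, ∑ s ∈ N', b s t * ψ s t :=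
    (integral_finset_sum N' fun s hs => hBψ s hs).symm
  rw [eN, eN', ← integral_add (integrable_finset_sum N fun s hs => hAφ s hs)
    (integrable_finset_sum N' fun s hs => hBψ s hs)]
  refine setIntegral_mono_on
    ((integrable_finset_sum N fun s hs => hAφ s hs).add
      (integrable_finset_sum N' fun s hs => hBψ s hs))
    ((integrable_finset_sum N fun s hs => hAv s hs).sub
      (integrable_finset_sum N' fun s hs => hBv s hs))
    hIm (fun t ht => ?_)
  have h1 : ∑ s ∈ N, a s t * φ s t ≤ ∑ s ∈ N, a s t * v s t := by
    refine Finset.sum_le_sum fun s hs => ?_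
    by_cases hs' : s ∈ N'
    · by_cases h : a s t < b s t
      · rw [hv2 s hs' t ht (Or.inr h)]
        have hk := hkey s hs hs' t ht
        have ha := ha0 s hs t ht
        nlinarith
      · rw [hv1 s hs t ht (Or.inr (not_lt.mp h))]
    · rw [hv1 s hs t ht (Or.inl hs')]
  have h2 : ∑ s ∈ N', b s t * v s t ≤ ∑ s ∈ N', -(b s t * ψ s t) := by
    refine Finset.sum_le_sum fun s hs' => ?_
    by_cases hs : s ∈ N
    · by_cases h : a s t < b s t
      · rw [hv2 s hs' t ht (Or.inr h)]; ring_nf; exact le_refl _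
      · rw [hv1 s hs t ht (Or.inr (not_lt.mp h))]
        have hk := hkey s hs hs' t ht
        have hb := hb0 s hs' t ht
        nlinarith
    · rw [hv2 s hs' t ht (Or.inl hs)]; ring_nf; exact le_refl _
  rw [Finset.sum_neg_distrib] at h2
  linarith
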